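/- For all real y ≤ 1, exp(y) ≤ 1 + y + (e - 2) * y^2. -/

import Mathlib

open Real Nat

lemma exp_hasSum (x : ℝ) : HasSum (fun n : ℕ => x ^ n / n !) (Real.exp x) := by
  rw [Real.exp_eq_exp_ℝ]
  exact NormedSpace.expSeries_div_hasSum_exp x

lemma exp_tail_hasSum (x : ℝ) :
    HasSum (fun n : ℕ => x ^ (n + 2) / (n + 2)!) (Real.exp x - (1 + x)) := by
  have h := (hasSum_nat_add_iff' (f := fun n : ℕ => x ^ n / n !) 2).mpr (exp_hasSum x)
  simpa [Finset.sum_range_succ, Nat.factorial] using h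

theorem exp_le_quadratic (y : ℝ) (hy : y ≤ 1) :
    Real.exp y ≤ 1 + y + (Real.exp 1 - 2) * y ^ 2 := by
  rcases le_or_gt (-1) y with h1 | h1
  · -- |y| ≤ 1 : termwise series comparison
    have hA := exp_tail_hasSum y
    have hB := (exp_tail_hasSum 1).mul_left (y ^ 2)
    have hle : Real.exp y - (1 + y) ≤ y ^ 2 * (Real.exp 1 - (1 + 1)) := by
      refine hasSum_le (fun n => ?_) hA hB
      have hfac : (0:ℝ) < (n + 2)! := by positivity
      rw [one_pow, div_le_iff₀ hfac, mul_assoc, one_div_mul_cancel (ne_of_gt hfac), mul_one]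
      calc y ^ (n + 2) ≤ |y ^ (n + 2)| := le_abs_self _
        _ = |y| ^ (n + 2) := by rw [abs_pow]
        _ ≤ |y| ^ 2 := pow_le_pow_of_le_one (abs_nonneg y) (abs_le.mpr ⟨h1, hy⟩) (by omega)
        _ = y ^ 2 := sq_abs y
    nlinarith [hle]
  · -- y < -1
    have he : (2.7182818283 : ℝ) < Real.exp 1 := Real.exp_one_gt_d9
    have hexp : Real.exp y ≤ Real.exp (-1) := Real.exp_le_exp.mpr (by linarith)
    have hinv : Real.exp (-1) ≤ 1 / 2 := by
      rw [Real.exp_neg]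
      rw [inv_le_comm₀ (by positivity) (by norm_num)]
      linarith
    nlinarith [sq_nonneg y, sq_nonneg (y + 1)]
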